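/- arXiv:2208.09452 — 7 statements merged into one kernel-verified Lean document; each statement's English description precedes it below -/
import Mathlib

section
/- For every real number t > 0, t·log t − t + 1 ≥ 3(t−1)² / (2(2+t)); equivalently, 2(2+t)(t·log t − t + 1) − 3(t−1)² ≥ 0. -/
open Real Set

private lemma hasDerivG (s : ℝ) (hs : 0 < s) :
    HasDerivAt (fun x : ℝ => (x + 1) * Real.log x - 2 * (x - 1))
      (Real.log s + (s + 1) / s - 2) s := by
  have h1 : HasDerivAt (fun x : ℝ => (x + 1) * Real.log x)
      (1 * Real.log s + (s + 1) * s⁻¹) s :=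
    (((hasDerivAt_id s).add_const 1).mul (Real.hasDerivAt_log hs.ne'))
  have h2 : HasDerivAt (fun x : ℝ => 2 * (x - 1)) 2 s := by
    simpa using ((hasDerivAt_id s).sub_const 1).const_mul 2
  have := h1.sub h2
  refine this.congr_deriv ?_
  field_simp

private lemma G_deriv (s : ℝ) (hs : 0 < s) :
    deriv (fun x : ℝ => (x + 1) * Real.log x - 2 * (x - 1)) s
      = Real.log s + (s + 1) / s - 2 := (hasDerivG s hs).deriv

private lemma G_deriv_nonneg (s : ℝ) (hs : 0 < s) :
    0 ≤ Real.log s + (s + 1) / s - 2 := by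
  have h : 1 - 1/s ≤ Real.log s := by
    have := Real.log_le_sub_one_of_pos (x := 1/s) (by positivity)
    have hlog : Real.log (1/s) = -Real.log s := by
      rw [one_div, Real.log_inv]
    rw [hlog] at this
    linarith
  have : (s + 1) / s = 1 + 1/s := by field_simp
  rw [this]; linarith

/-- `G t ≥ 0` for `t ≥ 1`. -/
private lemma G_nonneg (t : ℝ) (ht : 1 ≤ t) :
    0 ≤ (t + 1) * Real.log t - 2 * (t - 1) := by
  set G : ℝ → ℝ := fun x => (x + 1) * Real.log x - 2 * (x - 1) with hG
  have hmono : MonotoneOn G (Icc 1 t) := by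
    apply monotoneOn_of_deriv_nonneg (convex_Icc 1 t)
    · intro x hx
      exact (hasDerivG x (by linarith [hx.1])).differentiableAt.continuousAt.continuousWithinAt
    · intro x hx
      rw [interior_Icc] at hx
      exact (hasDerivG x (by linarith [hx.1])).differentiableAt.differentiableWithinAt
    · intro x hx
      rw [interior_Icc] at hx
      rw [G_deriv x (by linarith [hx.1])]
      exact G_deriv_nonneg x (by linarith [hx.1])
  have h0 : G 1 = 0 := by simp [hG]
  have := hmono (by simp [ht]) (by simp [ht]) ht
  rw [h0] at this
  exact this

/-- `G t ≤ 0` for `0 < t ≤ 1`. -/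
private lemma G_nonpos (t : ℝ) (ht0 : 0 < t) (ht : t ≤ 1) :
    (t + 1) * Real.log t - 2 * (t - 1) ≤ 0 := by
  set G : ℝ → ℝ := fun x => (x + 1) * Real.log x - 2 * (x - 1) with hG
  have hmono : MonotoneOn G (Icc t 1) := by
    apply monotoneOn_of_deriv_nonneg (convex_Icc t 1)
    · intro x hx
      exact (hasDerivG x (lt_of_lt_of_le ht0 hx.1)).differentiableAt.continuousAt.continuousWithinAt
    · intro x hx
      rw [interior_Icc] at hx
      exact (hasDerivG x (lt_trans ht0 hx.1)).differentiableAt.differentiableWithinAt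
    · intro x hx
      rw [interior_Icc] at hx
      rw [G_deriv x (lt_trans ht0 hx.1)]
      exact G_deriv_nonneg x (lt_trans ht0 hx.1)
  have h0 : G 1 = 0 := by simp [hG]
  have := hmono (by simp [ht, ht0.le]) (by simp [ht, ht0.le]) ht
  rw [h0] at this
  exact this

private lemma hasDerivF (s : ℝ) (hs : 0 < s) :
    HasDerivAt (fun x : ℝ => 2 * (2 + x) * (x * Real.log x - x + 1) - 3 * (x - 1) ^ 2)
      (4 * ((s + 1) * Real.log s - 2 * (s - 1))) s := by
  have hlog : HasDerivAt (fun x : ℝ => x * Real.log x) (Real.log s + 1) s := by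
    have := (hasDerivAt_id s).mul (Real.hasDerivAt_log hs.ne')
    refine this.congr_deriv ?_
    field_simp
    simp only [id]; ring
  have h1 : HasDerivAt (fun x : ℝ => x * Real.log x - x + 1) (Real.log s + 1 - 1) s :=
    ((hlog.sub (hasDerivAt_id s)).add_const 1)
  have h2 : HasDerivAt (fun x : ℝ => 2 * (2 + x)) 2 s := by
    simpa using ((hasDerivAt_const s (2:ℝ)).add (hasDerivAt_id s)).const_mul 2
  have h3 : HasDerivAt (fun x : ℝ => 2 * (2 + x) * (x * Real.log x - x + 1))
      (2 * (s * Real.log s - s + 1) + 2 * (2 + s) * (Real.log s + 1 - 1)) s := h2.mul h1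
  have h4 : HasDerivAt (fun x : ℝ => 3 * (x - 1) ^ 2) (3 * (2 * (s - 1))) s := by
    have := (((hasDerivAt_id s).sub_const 1).pow 2).const_mul 3
    refine this.congr_deriv ?_
    simp
  have := h3.sub h4
  refine this.congr_deriv ?_
  ring

private lemma F_deriv (s : ℝ) (hs : 0 < s) :
    deriv (fun x : ℝ => 2 * (2 + x) * (x * Real.log x - x + 1) - 3 * (x - 1) ^ 2) s
      = 4 * ((s + 1) * Real.log s - 2 * (s - 1)) := (hasDerivF s hs).deriv

/-- For every real `t > 0`, `t·log t − t + 1 ≥ 3(t−1)² / (2(2+t))`; equivalently,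
`2(2+t)(t·log t − t + 1) − 3(t−1)² ≥ 0`. -/
theorem stmt_1 :
    ∀ t : ℝ, 0 < t →
      3 * (t - 1) ^ 2 / (2 * (2 + t)) ≤ t * Real.log t - t + 1 ∧
        0 ≤ 2 * (2 + t) * (t * Real.log t - t + 1) - 3 * (t - 1) ^ 2 := by
  intro t ht
  set F : ℝ → ℝ := fun x => 2 * (2 + x) * (x * Real.log x - x + 1) - 3 * (x - 1) ^ 2 with hF
  have hF1 : F 1 = 0 := by simp [hF]
  have key : 0 ≤ F t := by
    rcases le_or_gt 1 t with h1 | h1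
    · have hmono : MonotoneOn F (Icc 1 t) := by
        apply monotoneOn_of_deriv_nonneg (convex_Icc 1 t)
        · intro x hx
          exact (hasDerivF x (by linarith [hx.1])).differentiableAt.continuousAt.continuousWithinAt
        · intro x hx
          rw [interior_Icc] at hx
          exact (hasDerivF x (by linarith [hx.1])).differentiableAt.differentiableWithinAt
        · intro x hx
          rw [interior_Icc] at hx
          rw [F_deriv x (by linarith [hx.1])]
          have := G_nonneg x hx.1.le
          linarith
      have := hmono (by simp [h1]) (by simp [h1]) h1
      rw [hF1] at this; exact this
    · have hanti : AntitoneOn F (Icc t 1) := by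
        apply antitoneOn_of_deriv_nonpos (convex_Icc t 1)
        · intro x hx
          exact (hasDerivF x (lt_of_lt_of_le ht hx.1)).differentiableAt.continuousAt.continuousWithinAt
        · intro x hx
          rw [interior_Icc] at hx
          exact (hasDerivF x (lt_trans ht hx.1)).differentiableAt.differentiableWithinAt
        · intro x hx
          rw [interior_Icc] at hx
          rw [F_deriv x (lt_trans ht hx.1)]
          have := G_nonpos x (lt_trans ht hx.1) hx.2.le
          linarith
      have := hanti (by simp [h1.le, ht.le]) (by simp [h1.le, ht.le]) h1.le
      rw [hF1] at this; exact this
  refine ⟨?_, key⟩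
  rw [div_le_iff₀ (by linarith : (0:ℝ) < 2 * (2 + t))]
  simp only [hF] at key
  nlinarith [key]
end

section
/- For all real numbers p > 0 and q > 0, p·log(p/q) − p + q ≥ 3(p−q)² / (2(p+2q)). -/
private lemma stmt2_hasDeriv (x : ℝ) (hx : 0 < x) :
    HasDerivAt (fun y => Real.log y - (5*y^2-4*y-1)/(2*y^2+4*y))
      ((x-1)^3/(x^2*(x+2)^2)) x := by
  have hden : 2*x^2+4*x ≠ 0 := by positivity
  have h1 : HasDerivAt Real.log x⁻¹ x := Real.hasDerivAt_log hx.ne'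
  have hx2 : HasDerivAt (fun y : ℝ => y^2) (2*x) x := by
    simpa using hasDerivAt_pow 2 x
  have hid : HasDerivAt (fun y : ℝ => y) 1 x := hasDerivAt_id x
  have h2 : HasDerivAt (fun y : ℝ => 5*y^2-4*y-1) (5*(2*x)-4*1) x :=
    ((hx2.const_mul 5).sub (hid.const_mul 4)).sub_const 1
  have h3 : HasDerivAt (fun y : ℝ => 2*y^2+4*y) (2*(2*x)+4*1) x :=
    (hx2.const_mul 2).add (hid.const_mul 4)
  have hdiv := h2.div h3 hden
  have htot := h1.sub hdiv
  refine htot.congr_deriv ?_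
  have hx' : x ≠ 0 := hx.ne'
  have hx2' : x + 2 ≠ 0 := by positivity
  field_simp
  ring

private lemma stmt2_key (t : ℝ) (ht : 0 < t) :
    (t-1)*(5*t+1)/(2*t*(t+2)) ≤ Real.log t := by
  set f : ℝ → ℝ := fun y => Real.log y - (5*y^2-4*y-1)/(2*y^2+4*y) with hf
  have hf1 : f 1 = 0 := by norm_num [hf]
  have hfle : 0 ≤ f t → (t-1)*(5*t+1)/(2*t*(t+2)) ≤ Real.log t := by
    intro h
    have : (5*t^2-4*t-1)/(2*t^2+4*t) ≤ Real.log t := by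
      simp only [hf] at h; linarith
    have heq : (t-1)*(5*t+1)/(2*t*(t+2)) = (5*t^2-4*t-1)/(2*t^2+4*t) := by
      ring_nf
    linarith [heq ▸ this]
  apply hfle
  rcases le_or_gt 1 t with h1 | h1
  · have hmono : MonotoneOn f (Set.Icc 1 t) := by
      apply monotoneOn_of_deriv_nonneg (convex_Icc 1 t)
      · intro x hx
        have hx0 : 0 < x := lt_of_lt_of_le one_pos hx.1
        exact (stmt2_hasDeriv x hx0).continuousAt.continuousWithinAt
      · intro x hx
        rw [interior_Icc] at hx
        have hx0 : 0 < x := lt_trans one_pos hx.1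
        exact (stmt2_hasDeriv x hx0).differentiableAt.differentiableWithinAt
      · intro x hx
        rw [interior_Icc] at hx
        have hx0 : 0 < x := lt_trans one_pos hx.1
        rw [(stmt2_hasDeriv x hx0).deriv]
        have : 0 ≤ (x-1)^3 := pow_nonneg (by linarith [hx.1]) 3
        positivity
    have := hmono (Set.left_mem_Icc.mpr h1) (Set.right_mem_Icc.mpr h1) h1
    linarith [hf1 ▸ this]
  · have hanti : AntitoneOn f (Set.Icc t 1) := by
      apply antitoneOn_of_deriv_nonpos (convex_Icc t 1)
      · intro x hx
        have hx0 : 0 < x := lt_of_lt_of_le ht hx.1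
        exact (stmt2_hasDeriv x hx0).continuousAt.continuousWithinAt
      · intro x hx
        rw [interior_Icc] at hx
        have hx0 : 0 < x := lt_trans ht hx.1
        exact (stmt2_hasDeriv x hx0).differentiableAt.differentiableWithinAt
      · intro x hx
        rw [interior_Icc] at hx
        have hx0 : 0 < x := lt_trans ht hx.1
        rw [(stmt2_hasDeriv x hx0).deriv]
        have hnum : (x-1)^3 ≤ 0 := Odd.pow_nonpos ⟨1, by norm_num⟩ (by linarith [hx.2])
        have hden : 0 < x^2*(x+2)^2 := by positivity
        exact div_nonpos_of_nonpos_of_nonneg hnum hden.le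
    have := hanti (Set.left_mem_Icc.mpr h1.le) (Set.right_mem_Icc.mpr h1.le) h1.le
    linarith [hf1 ▸ this]

/-- For all reals `p > 0` and `q > 0`, `p·log(p/q) − p + q ≥ 3(p−q)² / (2(p+2q))`. -/
theorem stmt_2 :
    ∀ p q : ℝ, 0 < p → 0 < q →
      3 * (p - q) ^ 2 / (2 * (p + 2 * q)) ≤ p * Real.log (p / q) - p + q := by
  intro p q hp hq
  have ht : 0 < p / q := div_pos hp hq
  have h := stmt2_key (p / q) ht
  have h2 : p * ((p/q-1)*(5*(p/q)+1)/(2*(p/q)*(p/q+2))) ≤ p * Real.log (p/q) :=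
    mul_le_mul_of_nonneg_left h hp.le
  have heq : 3 * (p - q) ^ 2 / (2 * (p + 2 * q))
      = p * ((p/q-1)*(5*(p/q)+1)/(2*(p/q)*(p/q+2))) - p + q := by
    have hq' : q ≠ 0 := hq.ne'
    have hp' : p ≠ 0 := hp.ne'
    have hpq : p + 2*q ≠ 0 := by positivity
    field_simp
    ring
  linarith
end

section
/- Let p and q be probability density functions on a measure space (X, μ) with p(x) > 0 and q(x) > 0 for all x, such that p·log(p/q) is integrable. Then KL(p,q) ≥ ∫ 3(p(x)−q(x))² / (2(p(x)+2q(x))) dμ(x). -/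
open MeasureTheory

lemma phi_deriv (s : ℝ) (hs : 0 < s) :
    HasDerivAt (fun t : ℝ => Real.log t - (t-1)*(5*t+1)/(2*t*(t+2)))
      ((s-1)^3/(s^2*(s+2)^2)) s := by
  have hD : (2*s*(s+2)) ≠ 0 := by positivity
  have h1 : HasDerivAt Real.log s⁻¹ s := Real.hasDerivAt_log hs.ne'
  have hN : HasDerivAt (fun t : ℝ => (t-1)*(5*t+1)) (1*(5*s+1) + (s-1)*(5*1)) s := by
    have := (((hasDerivAt_id s).sub_const 1).mul (((hasDerivAt_id s).const_mul 5).add_const 1))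
    exact this
  have hDd : HasDerivAt (fun t : ℝ => 2*t*(t+2)) (2*1*(s+2) + 2*s*1) s := by
    have := (((hasDerivAt_id s).const_mul 2).mul ((hasDerivAt_id s).add_const 2))
    exact this
  have h2 := hN.div hDd hD
  have := h1.sub h2
  refine this.congr_deriv ?_
  field_simp
  ring

lemma phi_nonneg (t : ℝ) (ht : 0 < t) :
    0 ≤ Real.log t - (t-1)*(5*t+1)/(2*t*(t+2)) := by
  set f : ℝ → ℝ := fun t => Real.log t - (t-1)*(5*t+1)/(2*t*(t+2)) with hf
  have hf1 : f 1 = 0 := by simp [hf]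
  rcases le_total 1 t with h | h
  · have hmono : MonotoneOn f (Set.Ici 1) := by
      apply monotoneOn_of_deriv_nonneg (convex_Ici 1)
      · intro s hs
        exact (phi_deriv s (lt_of_lt_of_le one_pos hs)).continuousAt.continuousWithinAt
      · intro s hs
        rw [interior_Ici] at hs
        exact (phi_deriv s (lt_trans one_pos hs)).differentiableAt.differentiableWithinAt
      · intro s hs
        rw [interior_Ici] at hs
        rw [(phi_deriv s (lt_trans one_pos hs)).deriv]
        have h1 : (0:ℝ) < s - 1 := by linarith [Set.mem_Ioi.mp hs]
        have h2 : (0:ℝ) < s := lt_trans one_pos hs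
        positivity
    have h0 := hmono (Set.self_mem_Ici) (Set.mem_Ici.mpr h) h
    rw [hf1] at h0
    exact h0
  · have hanti : AntitoneOn f (Set.Icc t 1) := by
      apply antitoneOn_of_deriv_nonpos (convex_Icc t 1)
      · intro s hs
        exact (phi_deriv s (lt_of_lt_of_le ht hs.1)).continuousAt.continuousWithinAt
      · intro s hs
        rw [interior_Icc] at hs
        exact (phi_deriv s (lt_trans ht hs.1)).differentiableAt.differentiableWithinAt
      · intro s hs
        rw [interior_Icc] at hs
        rw [(phi_deriv s (lt_trans ht hs.1)).deriv]
        have h1 : (s-1)^3 ≤ 0 := by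
          have hs2 := hs.2
          nlinarith [sq_nonneg (s-1)]
        have h2 : (0:ℝ) < s^2*(s+2)^2 := by
          have : 0 < s := lt_trans ht hs.1
          positivity
        exact div_nonpos_of_nonpos_of_nonneg h1 h2.le
    have h0 := hanti (Set.mem_Icc.mpr ⟨le_refl t, h⟩) (Set.mem_Icc.mpr ⟨h, le_refl 1⟩) h
    rw [hf1] at h0
    exact h0

lemma key_ineq (a b : ℝ) (ha : 0 < a) (hb : 0 < b) :
    3 * (a - b) ^ 2 / (2 * (a + 2 * b)) ≤ a * Real.log (a / b) - a + b := by
  have ht : 0 < a / b := div_pos ha hb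
  have h := phi_nonneg (a/b) ht
  have h2 : 0 ≤ a * (Real.log (a/b) - (a/b-1)*(5*(a/b)+1)/(2*(a/b)*(a/b+2))) :=
    mul_nonneg ha.le h
  have heq : a * (Real.log (a/b) - (a/b-1)*(5*(a/b)+1)/(2*(a/b)*(a/b+2)))
      = a * Real.log (a/b) - a + b - 3 * (a - b) ^ 2 / (2 * (a + 2 * b)) := by
    have hab : a + 2*b ≠ 0 := by positivity
    field_simp
    ring
  linarith [heq ▸ h2]

/-- If `p` and `q` are strictly positive probability density functions on a measure
space `(X, μ)` such that `p·log(p/q)` is integrable, then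
`KL(p,q) ≥ ∫ 3(p−q)² / (2(p+2q)) dμ`. -/
theorem stmt_3 {X : Type*} [MeasurableSpace X] (μ : Measure X)
    (p q : X → ℝ) (hpm : Measurable p) (hqm : Measurable q)
    (hp0 : ∀ x, 0 < p x) (hq0 : ∀ x, 0 < q x)
    (hp1 : ∫ x, p x ∂μ = 1) (hq1 : ∫ x, q x ∂μ = 1)
    (hint : Integrable (fun x => p x * Real.log (p x / q x)) μ) :
    ∫ x, 3 * (p x - q x) ^ 2 / (2 * (p x + 2 * q x)) ∂μ ≤
      ∫ x, p x * Real.log (p x / q x) ∂μ := by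
  have hpint : Integrable p μ := by
    by_contra h; rw [integral_undef h] at hp1; norm_num at hp1
  have hqint : Integrable q μ := by
    by_contra h; rw [integral_undef h] at hq1; norm_num at hq1
  have hhint : Integrable (fun x => p x * Real.log (p x / q x) - p x + q x) μ :=
    (hint.sub hpint).add hqint
  have hle : ∀ x, 3 * (p x - q x) ^ 2 / (2 * (p x + 2 * q x)) ≤
      p x * Real.log (p x / q x) - p x + q x :=
    fun x => key_ineq _ _ (hp0 x) (hq0 x)
  have hg0 : ∀ x, 0 ≤ 3 * (p x - q x) ^ 2 / (2 * (p x + 2 * q x)) := by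
    intro x
    have h1 := hp0 x
    have h2 := hq0 x
    positivity
  have hgm : AEStronglyMeasurable
      (fun x => 3 * (p x - q x) ^ 2 / (2 * (p x + 2 * q x))) μ := by
    apply Measurable.aestronglyMeasurable
    exact (((hpm.sub hqm).pow_const 2).const_mul 3).div
      ((hpm.add (hqm.const_mul 2)).const_mul 2)
  have hgint : Integrable (fun x => 3 * (p x - q x) ^ 2 / (2 * (p x + 2 * q x))) μ := by
    apply Integrable.mono' hhint hgm
    filter_upwards with x
    rw [Real.norm_eq_abs, abs_of_nonneg (hg0 x)]
    exact hle x
  calc ∫ x, 3 * (p x - q x) ^ 2 / (2 * (p x + 2 * q x)) ∂μ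
      ≤ ∫ x, p x * Real.log (p x / q x) - p x + q x ∂μ :=
        integral_mono hgint hhint hle
    _ = (∫ x, p x * Real.log (p x / q x) ∂μ) - (∫ x, p x ∂μ) + (∫ x, q x ∂μ) := by
        have h1 : Integrable (fun x => p x * Real.log (p x / q x) - p x) μ := hint.sub hpint
        rw [integral_add h1 hqint, integral_sub hint hpint]
    _ = ∫ x, p x * Real.log (p x / q x) ∂μ := by rw [hp1, hq1]; ring
end

section
/- Let p and q be probability density functions on a measure space (X, μ) and let 0 < a ≤ b be real numbers such that a ≤ p(x) ≤ b and a ≤ q(x) ≤ b for all x. Then KL(p,q) ≥ (1/(2b)) · ∫ (p(x) − q(x))² dμ(x), i.e., KL(p,q) ≥ (1/(2b)) · ‖p − q‖₂². -/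
open MeasureTheory

lemma pt_key (b : ℝ) (x y : ℝ) (hx : 0 < x) (hxb : x ≤ b) (hy : 0 < y) (hyb : y ≤ b) :
    (x - y) + (x - y)^2 / (2*b) ≤ x * Real.log (x / y) := by
  have hb : 0 < b := lt_of_lt_of_le hx hxb
  set f : ℝ → ℝ := fun t => t * Real.log t - t * Real.log y - (t - y) - (t-y)^2/(2*b) with hf
  have hfy : f y = 0 := by simp [hf]
  have hderiv : ∀ t : ℝ, t ≠ 0 → HasDerivAt f (Real.log t - Real.log y - (t - y)/b) t := by
    intro t ht
    have h1 := Real.hasDerivAt_mul_log ht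
    have h2 : HasDerivAt (fun s : ℝ => s * Real.log y) (Real.log y) t :=
      by simpa using (hasDerivAt_id t).mul_const (Real.log y)
    have h3 : HasDerivAt (fun s : ℝ => s - y) 1 t := (hasDerivAt_id t).sub_const y
    have h4 : HasDerivAt (fun s : ℝ => (s - y)^2 / (2*b)) ((2 * (t - y)^1 * 1) / (2*b)) t :=
      (h3.pow 2).div_const _
    have := ((h1.sub h2).sub h3).sub h4
    refine HasDerivAt.congr_deriv (f := f) this ?_
    ring
  have hcont : Continuous f := by
    have : Continuous fun t : ℝ => t * Real.log t := Real.continuous_mul_log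
    fun_prop
  have hgoal : 0 ≤ f x := by
    rcases lt_trichotomy x y with hxy | hxy | hxy
    · obtain ⟨c, hc, hc'⟩ := exists_hasDerivAt_eq_slope f
        (fun t => Real.log t - Real.log y - (t - y)/b) hxy hcont.continuousOn
        (fun t ht => hderiv t (by nlinarith [ht.1, hx]))
      have hca : x < c := hc.1
      have hcy : c < y := hc.2
      have hcpos : 0 < c := hx.trans hca
      -- f' c ≤ 0
      have hlog : Real.log c - Real.log y ≤ c/y - 1 := by
        have := Real.log_le_sub_one_of_pos (div_pos hcpos hy)
        rwa [Real.log_div hcpos.ne' hy.ne'] at this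
      have hfc : Real.log c - Real.log y - (c - y)/b ≤ 0 := by
        have h1 : (c - y)/y ≤ (c - y)/b := by
          rw [div_le_div_iff₀ hy hb]
          nlinarith
        have : c/y - 1 = (c - y)/y := by field_simp
        linarith [this ▸ hlog]
      rw [hc', hfy] at hfc
      have : (0 - f x) / (y - x) ≤ 0 := hfc
      have hyx : 0 < y - x := by linarith
      nlinarith [div_le_iff₀ hyx |>.mp this]
    · simp [hxy, hfy]
    · obtain ⟨c, hc, hc'⟩ := exists_hasDerivAt_eq_slope f
        (fun t => Real.log t - Real.log y - (t - y)/b) hxy hcont.continuousOn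
        (fun t ht => hderiv t (by nlinarith [ht.1, hy]))
      have hcy : y < c := hc.1
      have hcx : c < x := hc.2
      have hcpos : 0 < c := hy.trans hcy
      have hlog : Real.log y - Real.log c ≤ y/c - 1 := by
        have := Real.log_le_sub_one_of_pos (div_pos hy hcpos)
        rwa [Real.log_div hy.ne' hcpos.ne'] at this
      have hfc : 0 ≤ Real.log c - Real.log y - (c - y)/b := by
        have hcb : c ≤ b := le_of_lt (hcx.trans_le hxb)
        have h1 : (c - y)/b ≤ (c - y)/c := by
          rw [div_le_div_iff₀ hb hcpos]
          nlinarith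
        have h2 : (c - y)/c ≤ Real.log c - Real.log y := by
          have : y/c - 1 = -((c - y)/c) := by field_simp; ring
          linarith [this ▸ hlog]
        linarith
      rw [hc', hfy] at hfc
      have hyx : 0 < x - y := by linarith
      nlinarith [le_div_iff₀ hyx |>.mp hfc]
  have hlogd : Real.log (x / y) = Real.log x - Real.log y := Real.log_div hx.ne' hy.ne'
  simp only [hf] at hgoal
  rw [hlogd]
  nlinarith [hgoal]

/-- If `p` and `q` are probability density functions on `(X, μ)` with
`0 < a ≤ p(x) ≤ b` and `a ≤ q(x) ≤ b` for all `x`, then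
`KL(p,q) ≥ (1/(2b)) · ∫ (p − q)² dμ = (1/(2b)) · ‖p − q‖₂²`. -/
theorem stmt_4 {X : Type*} [MeasurableSpace X] (μ : Measure X)
    (p q : X → ℝ) (a b : ℝ) (ha : 0 < a) (hab : a ≤ b)
    (hpm : Measurable p) (hqm : Measurable q)
    (hpa : ∀ x, a ≤ p x) (hpb : ∀ x, p x ≤ b)
    (hqa : ∀ x, a ≤ q x) (hqb : ∀ x, q x ≤ b)
    (hp1 : ∫ x, p x ∂μ = 1) (hq1 : ∫ x, q x ∂μ = 1) :
    (1 / (2 * b)) * ∫ x, (p x - q x) ^ 2 ∂μ ≤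
      ∫ x, p x * Real.log (p x / q x) ∂μ := by
  have hb : 0 < b := lt_of_lt_of_le ha hab
  have hpint : Integrable p μ := by
    by_contra h
    rw [integral_undef h] at hp1
    norm_num at hp1
  have hqint : Integrable q μ := by
    by_contra h
    rw [integral_undef h] at hq1
    norm_num at hq1
  haveI hfin : IsFiniteMeasure μ := by
    have hca : Integrable (fun _ : X => a) μ := by
      refine hpint.mono aestronglyMeasurable_const (ae_of_all _ fun x => ?_)
      rw [Real.norm_eq_abs, Real.norm_eq_abs, abs_of_pos ha,
        abs_of_pos (lt_of_lt_of_le ha (hpa x))]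
      exact hpa x
    rcases (integrable_const_iff).mp hca with h | h
    · exact absurd h ha.ne'
    · exact h
  have hsq : Integrable (fun x => (p x - q x) ^ 2) μ := by
    refine (integrable_const ((b - a)^2)).mono
      (((hpm.sub hqm).pow_const 2).aestronglyMeasurable) (ae_of_all _ fun x => ?_)
    have h1 : |p x - q x| ≤ b - a := by
      rw [abs_le]; constructor <;> nlinarith [hpa x, hpb x, hqa x, hqb x]
    rw [Real.norm_eq_abs, Real.norm_eq_abs, abs_of_nonneg (sq_nonneg _),
      abs_of_nonneg (sq_nonneg _)]
    have := abs_le.mp h1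
    nlinarith [this.1, this.2]
  have hkl : Integrable (fun x => p x * Real.log (p x / q x)) μ := by
    refine (integrable_const (b * (Real.log b - Real.log a))).mono
      ((hpm.mul ((hpm.div hqm).log)).aestronglyMeasurable) (ae_of_all _ fun x => ?_)
    have hpx : 0 < p x := lt_of_lt_of_le ha (hpa x)
    have hqx : 0 < q x := lt_of_lt_of_le ha (hqa x)
    have hla : Real.log a ≤ Real.log (p x) := Real.log_le_log ha (hpa x)
    have hlb : Real.log (p x) ≤ Real.log b := Real.log_le_log hpx (hpb x)
    have hla' : Real.log a ≤ Real.log (q x) := Real.log_le_log ha (hqa x)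
    have hlb' : Real.log (q x) ≤ Real.log b := Real.log_le_log hqx (hqb x)
    rw [Real.norm_eq_abs, Real.norm_eq_abs, Real.log_div hpx.ne' hqx.ne', abs_mul,
      abs_of_pos hpx]
    have h2 : |Real.log (p x) - Real.log (q x)| ≤ Real.log b - Real.log a := by
      rw [abs_le]; constructor <;> linarith
    have h3 : 0 ≤ Real.log b - Real.log a := by linarith
    calc p x * |Real.log (p x) - Real.log (q x)|
        ≤ b * (Real.log b - Real.log a) := by
          apply mul_le_mul (hpb x) h2 (abs_nonneg _) hb.le
      _ ≤ |b * (Real.log b - Real.log a)| := le_abs_self _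
  have hd : Integrable (fun x => p x - q x) μ := hpint.sub hqint
  have hlhs : Integrable (fun x => (p x - q x) + (p x - q x)^2 / (2*b)) μ :=
    hd.add (hsq.div_const _)
  have hmono : ∫ x, ((p x - q x) + (p x - q x)^2 / (2*b)) ∂μ ≤
      ∫ x, p x * Real.log (p x / q x) ∂μ := by
    refine integral_mono hlhs hkl fun x => ?_
    exact pt_key b (p x) (q x) (lt_of_lt_of_le ha (hpa x)) (hpb x)
      (lt_of_lt_of_le ha (hqa x)) (hqb x)
  rw [integral_add hd (hsq.div_const _), integral_sub hpint hqint,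
    hp1, hq1, integral_div] at hmono
  have : (1:ℝ) - 1 + (∫ x, (p x - q x)^2 ∂μ) / (2*b) =
      (1/(2*b)) * ∫ x, (p x - q x)^2 ∂μ := by ring
  linarith [this ▸ hmono]
end

section
/- Let (A, μ) be a finite measure space, Q : A → ℝ a bounded measurable function, π_t a strictly positive bounded probability density on A, and η > 0, α ≥ 0. Define π_{t+1}(a) = exp((η·Q(a) + log π_t(a)) / (ηα+1)) / Z, where Z = ∫ exp((η·Q(a') + log π_t(a'))/(ηα+1)) dμ(a'). Then π_{t+1} is a probability density and it maximizes the mirror-descent objective F(π) = ∫ π·Q dμ + α·H(π) − (1/η)·KL(π, π_t) over all probability densities π on A with the relevant integrals finite. -/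
open MeasureTheory

set_option maxHeartbeats 1000000 in
/-- The mirror-descent update
`π_{t+1}(a) = exp((η·Q(a) + log π_t(a))/(ηα+1)) / Z` is a probability density and
maximizes `F(π) = ∫ π·Q dμ + α·H(π) − (1/η)·KL(π, π_t)` over all probability
densities `π` on a finite measure space `(A, μ)` with the relevant integrals finite. -/
theorem stmt_10 {A : Type*} [MeasurableSpace A] (μ : Measure A) [IsFiniteMeasure μ]
    (Q : A → ℝ) (hQm : Measurable Q) (C : ℝ) (hQb : ∀ a, |Q a| ≤ C)
    (πt : A → ℝ) (hπtm : Measurable πt) (hπt0 : ∀ a, 0 < πt a)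
    (bt : ℝ) (hπtb : ∀ a, πt a ≤ bt) (hπt1 : ∫ a, πt a ∂μ = 1)
    (η α : ℝ) (hη : 0 < η) (hα : 0 ≤ α)
    (Z : ℝ)
    (hZ : Z = ∫ a, Real.exp ((η * Q a + Real.log (πt a)) / (η * α + 1)) ∂μ)
    (g : A → ℝ)
    (hg : ∀ a, g a = Real.exp ((η * Q a + Real.log (πt a)) / (η * α + 1)) / Z) :
    (∀ a, 0 ≤ g a) ∧ (∫ a, g a ∂μ = 1) ∧
      ∀ π : A → ℝ, Measurable π → (∀ a, 0 ≤ π a) → (∫ a, π a ∂μ = 1) →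
        Integrable (fun a => π a * Q a) μ →
        Integrable (fun a => π a * Real.log (π a)) μ →
        Integrable (fun a => π a * Real.log (π a / πt a)) μ →
        (∫ a, π a * Q a ∂μ) + α * (-∫ a, π a * Real.log (π a) ∂μ) -
            (1 / η) * ∫ a, π a * Real.log (π a / πt a) ∂μ ≤
          (∫ a, g a * Q a ∂μ) + α * (-∫ a, g a * Real.log (g a) ∂μ) -
            (1 / η) * ∫ a, g a * Real.log (g a / πt a) ∂μ := by
  set β : ℝ := η * α + 1 with hβdef
  have hβ : 0 < β := by positivity
  set f : A → ℝ := fun a => Real.exp ((η * Q a + Real.log (πt a)) / β) with hfdef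
  have hfm : Measurable f := (((hQm.const_mul η).add hπtm.log).div_const β).exp
  have hf0 : ∀ a, 0 < f a := fun a => Real.exp_pos _
  -- μ is nonzero
  have hμ : μ ≠ 0 := by
    intro h
    rw [h, integral_zero_measure] at hπt1
    exact one_ne_zero hπt1.symm
  have hA : Nonempty A := by
    have h1 := (Measure.measure_univ_pos.mpr hμ).ne'
    obtain ⟨a, -⟩ := nonempty_of_measure_ne_zero h1
    exact ⟨a⟩
  obtain ⟨a₀⟩ := hA
  have hbt : 0 < bt := lt_of_lt_of_le (hπt0 a₀) (hπtb a₀)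
  -- f is bounded
  set Fmax : ℝ := Real.exp ((η * C + Real.log bt) / β) with hFmaxdef
  have hfb : ∀ a, f a ≤ Fmax := by
    intro a
    apply Real.exp_le_exp.2
    refine div_le_div_of_nonneg_right ?_ hβ.le
    have h1 : Q a ≤ C := (abs_le.1 (hQb a)).2
    have h2 : Real.log (πt a) ≤ Real.log bt := Real.log_le_log (hπt0 a) (hπtb a)
    nlinarith [hη.le]
  have hfint : Integrable f μ := by
    apply Integrable.mono' (integrable_const Fmax) hfm.aestronglyMeasurable
    filter_upwards with a
    rw [Real.norm_eq_abs, abs_of_pos (hf0 a)]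
    exact hfb a
  -- Z positivity
  have hZ' : Z = ∫ a, f a ∂μ := hZ
  have hZpos : 0 < Z := by
    rw [hZ']
    rw [integral_pos_iff_support_of_nonneg (fun a => (hf0 a).le) hfint]
    have hs : Function.support f = Set.univ := by
      ext a
      simp [Function.mem_support, (hf0 a).ne']
    rw [hs]
    exact Measure.measure_univ_pos.mpr hμ
  set c : ℝ := Real.log Z with hcdef
  have hg0 : ∀ a, 0 < g a := fun a => (hg a) ▸ div_pos (Real.exp_pos _) hZpos
  have hgm : Measurable g := by
    have : g = fun a => f a / Z := funext hg
    rw [this]; exact hfm.div_const Z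
  have hgf : ∀ a, g a = f a / Z := hg
  have hgint : Integrable g μ := by
    have : g = fun a => f a / Z := funext hg
    rw [this]; exact hfint.div_const Z
  have hg1 : ∫ a, g a ∂μ = 1 := by
    have : g = fun a => f a / Z := funext hg
    rw [this, integral_div, ← hZ']
    exact div_self hZpos.ne'
  have hlogg : ∀ a, Real.log (g a) = (η * Q a + Real.log (πt a)) / β - c := by
    intro a
    rw [hgf a, Real.log_div (Real.exp_pos _).ne' hZpos.ne', Real.log_exp]
  -- integrability of f * log πt
  have hkey : ∀ x : ℝ, x ≤ 0 → Real.exp (x / β) * |x| ≤ β := by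
    intro x hx
    have h1 : -x / β ≤ Real.exp (-x / β) := le_trans (by linarith [Real.add_one_le_exp (-x/β)]) le_rfl
    have h2 : -x ≤ β * Real.exp (-x / β) := by
      rw [div_le_iff₀ hβ] at h1; linarith [h1]
    rw [abs_of_nonpos hx]
    calc Real.exp (x / β) * -x ≤ Real.exp (x / β) * (β * Real.exp (-x / β)) := by
          apply mul_le_mul_of_nonneg_left h2 (Real.exp_pos _).le
      _ = β * Real.exp (x / β + -x / β) := by rw [Real.exp_add]; ring
      _ = β := by rw [show x / β + -x / β = 0 by ring, Real.exp_zero, mul_one]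
  set K : ℝ := Real.exp (η * C / β) * β + Fmax * |Real.log bt| with hKdef
  have hflogt : Integrable (fun a => f a * Real.log (πt a)) μ := by
    apply Integrable.mono' (integrable_const K) (hfm.mul hπtm.log).aestronglyMeasurable
    filter_upwards with a
    simp only [Pi.mul_apply]
    rw [Real.norm_eq_abs, abs_mul, abs_of_pos (hf0 a)]
    rcases le_or_gt (Real.log (πt a)) 0 with h | h
    · have : f a = Real.exp (η * Q a / β) * Real.exp (Real.log (πt a) / β) := by
        rw [hfdef]; simp only []
        rw [← Real.exp_add, ← add_div]
      rw [this, mul_assoc]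
      have h1 : Real.exp (Real.log (πt a) / β) * |Real.log (πt a)| ≤ β := hkey _ h
      have h2 : Real.exp (η * Q a / β) ≤ Real.exp (η * C / β) := by
        apply Real.exp_le_exp.2
        refine div_le_div_of_nonneg_right ?_ hβ.le
        nlinarith [(abs_le.1 (hQb a)).2, hη.le]
      calc Real.exp (η * Q a / β) * (Real.exp (Real.log (πt a) / β) * |Real.log (πt a)|)
          ≤ Real.exp (η * C / β) * β := by
            apply mul_le_mul h2 h1 (by positivity) (Real.exp_pos _).le
        _ ≤ K := by
            rw [hKdef]
            nlinarith [abs_nonneg (Real.log bt), (Real.exp_pos ((η * C + Real.log bt) / β)).le]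
    · have h1 : |Real.log (πt a)| ≤ |Real.log bt| := by
        rw [abs_of_pos h]
        exact le_trans (Real.log_le_log (hπt0 a) (hπtb a)) (le_abs_self _)
      calc f a * |Real.log (πt a)| ≤ Fmax * |Real.log bt| := by
            apply mul_le_mul (hfb a) h1 (abs_nonneg _) (by positivity)
        _ ≤ K := by
            rw [hKdef]
            nlinarith [(Real.exp_pos (η * C / β)).le, hβ.le]
  have hglogt : Integrable (fun a => g a * Real.log (πt a)) μ := by
    have : (fun a => g a * Real.log (πt a)) = fun a => (f a * Real.log (πt a)) / Z := by
      funext a; rw [hgf a]; ring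
    rw [this]; exact hflogt.div_const Z
  -- the master formula
  have formula : ∀ π : A → ℝ, Measurable π → (∀ a, 0 ≤ π a) → (∫ a, π a ∂μ = 1) →
      Integrable (fun a => π a * Q a) μ →
      Integrable (fun a => π a * Real.log (π a)) μ →
      Integrable (fun a => π a * Real.log (π a / πt a)) μ →
      Integrable (fun a => π a * Real.log (g a / π a)) μ ∧
      (∫ a, π a * Q a ∂μ) + α * (-∫ a, π a * Real.log (π a) ∂μ) -
          (1 / η) * ∫ a, π a * Real.log (π a / πt a) ∂μ
        = (β / η) * (∫ a, π a * Real.log (g a / π a) ∂μ) + (β / η) * c := by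
    intro π hπm hπ0 hπ1 hiQ hilog hikl
    have hπint : Integrable π μ := by
      by_contra h
      rw [integral_undef h] at hπ1
      exact one_ne_zero hπ1.symm
    have hlogt_eq : ∀ a, π a * Real.log (πt a)
        = π a * Real.log (π a) - π a * Real.log (π a / πt a) := by
      intro a
      rcases eq_or_lt_of_le (hπ0 a) with h | h
      · simp [← h]
      · rw [Real.log_div h.ne' (hπt0 a).ne']; ring
    have hilogt : Integrable (fun a => π a * Real.log (πt a)) μ :=
      (hilog.sub hikl).congr (ae_of_all _ fun a => (hlogt_eq a).symm)
    have hTi : ∫ a, π a * Real.log (π a / πt a) ∂μ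
        = (∫ a, π a * Real.log (π a) ∂μ) - ∫ a, π a * Real.log (πt a) ∂μ := by
      rw [← integral_sub hilog hilogt]
      congr 1; funext a; rw [hlogt_eq a]; ring
    have hlogg_eq : ∀ a, π a * Real.log (g a)
        = (η / β) * (π a * Q a) + (1 / β) * (π a * Real.log (πt a)) - c * π a := by
      intro a
      rw [hlogg a]
      field_simp
    have hilogg : Integrable (fun a => π a * Real.log (g a)) μ :=
      (((hiQ.const_mul (η / β)).add (hilogt.const_mul (1 / β))).sub
        (hπint.const_mul c)).congr (ae_of_all _ fun a => (hlogg_eq a).symm)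
    have hIlogg : ∫ a, π a * Real.log (g a) ∂μ
        = (η / β) * (∫ a, π a * Q a ∂μ) + (1 / β) * (∫ a, π a * Real.log (πt a) ∂μ) - c := by
      calc ∫ a, π a * Real.log (g a) ∂μ
          = ∫ a, ((η / β) * (π a * Q a) + (1 / β) * (π a * Real.log (πt a)) - c * π a) ∂μ := by
            congr 1; funext a; exact hlogg_eq a
        _ = (∫ a, (η / β) * (π a * Q a) ∂μ) + (∫ a, (1 / β) * (π a * Real.log (πt a)) ∂μ)
            - ∫ a, c * π a ∂μ := by
            have hi1 : Integrable (fun a => (η / β) * (π a * Q a)) μ := hiQ.const_mul _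
            have hi2 : Integrable (fun a => (1 / β) * (π a * Real.log (πt a))) μ :=
              hilogt.const_mul _
            have hi12 : Integrable
                (fun a => (η / β) * (π a * Q a) + (1 / β) * (π a * Real.log (πt a))) μ :=
              hi1.add hi2
            rw [integral_sub hi12 (hπint.const_mul c), integral_add hi1 hi2]
        _ = (η / β) * (∫ a, π a * Q a ∂μ) + (1 / β) * (∫ a, π a * Real.log (πt a) ∂μ) - c := by
            rw [integral_const_mul, integral_const_mul, integral_const_mul, hπ1, mul_one]
    have hratio_eq : ∀ a, π a * Real.log (g a / π a)
        = π a * Real.log (g a) - π a * Real.log (π a) := by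
      intro a
      rcases eq_or_lt_of_le (hπ0 a) with h | h
      · simp [← h]
      · rw [Real.log_div (hg0 a).ne' h.ne']; ring
    have hiratio : Integrable (fun a => π a * Real.log (g a / π a)) μ :=
      (hilogg.sub hilog).congr (ae_of_all _ fun a => (hratio_eq a).symm)
    refine ⟨hiratio, ?_⟩
    have hIratio : ∫ a, π a * Real.log (g a / π a) ∂μ
        = (∫ a, π a * Real.log (g a) ∂μ) - ∫ a, π a * Real.log (π a) ∂μ := by
      rw [← integral_sub hilogg hilog]
      congr 1; funext a; exact hratio_eq a
    rw [hIratio, hIlogg, hTi]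
    have hηne : η ≠ 0 := hη.ne'
    have hβne : β ≠ 0 := hβ.ne'
    rw [hβdef]
    field_simp
    ring
  -- apply formula to g
  have higQ : Integrable (fun a => g a * Q a) μ := by
    apply Integrable.mono' (integrable_const (Fmax / Z * |C|)) (hgm.mul hQm).aestronglyMeasurable
    filter_upwards with a
    simp only [Pi.mul_apply]
    rw [Real.norm_eq_abs, abs_mul, abs_of_pos (hg0 a)]
    apply mul_le_mul _ ((hQb a).trans (le_abs_self C)) (abs_nonneg _) (by positivity)
    rw [hgf a]
    exact div_le_div_of_nonneg_right (hfb a) hZpos.le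
  have higlog : Integrable (fun a => g a * Real.log (g a)) μ := by
    have heq : ∀ a, g a * Real.log (g a)
        = (η / β) * (g a * Q a) + (1 / β) * (g a * Real.log (πt a)) - c * g a := by
      intro a
      rw [hlogg a]
      field_simp
    exact (((higQ.const_mul (η / β)).add (hglogt.const_mul (1 / β))).sub
      (hgint.const_mul c)).congr (ae_of_all _ fun a => (heq a).symm)
  have higkl : Integrable (fun a => g a * Real.log (g a / πt a)) μ := by
    have heq : ∀ a, g a * Real.log (g a / πt a)
        = g a * Real.log (g a) - g a * Real.log (πt a) := by
      intro a
      rw [Real.log_div (hg0 a).ne' (hπt0 a).ne']; ring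
    exact (higlog.sub hglogt).congr (ae_of_all _ fun a => (heq a).symm)
  obtain ⟨_, hGeq⟩ := formula g hgm (fun a => (hg0 a).le) hg1 higQ higlog higkl
  have hGratio : ∫ a, g a * Real.log (g a / g a) ∂μ = 0 := by
    have : ∀ a, g a * Real.log (g a / g a) = 0 := by
      intro a
      rw [div_self (hg0 a).ne', Real.log_one, mul_zero]
    simp [this]
  rw [hGratio, mul_zero, zero_add] at hGeq
  refine ⟨fun a => (hg0 a).le, hg1, ?_⟩
  intro π hπm hπ0 hπ1 hiQ hilog hikl
  obtain ⟨hiratio, hPeq⟩ := formula π hπm hπ0 hπ1 hiQ hilog hikl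
  have hπint : Integrable π μ := by
    by_contra h
    rw [integral_undef h] at hπ1
    exact one_ne_zero hπ1.symm
  have hIle : ∫ a, π a * Real.log (g a / π a) ∂μ ≤ 0 := by
    have hmono : ∫ a, π a * Real.log (g a / π a) ∂μ ≤ ∫ a, (g a - π a) ∂μ := by
      apply integral_mono hiratio (hgint.sub hπint)
      intro a
      show π a * Real.log (g a / π a) ≤ g a - π a
      rcases eq_or_lt_of_le (hπ0 a) with h | h
      · simp [← h, (hg0 a).le]
      · have h1 : Real.log (g a / π a) ≤ g a / π a - 1 :=
          Real.log_le_sub_one_of_pos (div_pos (hg0 a) h)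
        have h2 : π a * Real.log (g a / π a) ≤ π a * (g a / π a - 1) :=
          mul_le_mul_of_nonneg_left h1 h.le
        have h3 : π a * (g a / π a - 1) = g a - π a := by
          field_simp
        linarith [h2, h3.le]
    rw [integral_sub hgint hπint, hg1, hπ1] at hmono
    simpa using hmono
  rw [hPeq, hGeq]
  have hβη : 0 ≤ β / η := by positivity
  have hprod : (β / η) * (∫ a, π a * Real.log (g a / π a) ∂μ) ≤ 0 :=
    mul_nonpos_of_nonneg_of_nonpos hβη hIle
  linarith
end

section
/- Let (A, μ) be a finite measure space, Q : A → ℝ bounded measurable, π_t a strictly positive bounded probability density, η > 0, α ≥ 0, and let g(a) = exp((η·Q(a) + log π_t(a))/(ηα+1)) / Z with Z = ∫ exp((η·Q + log π_t)/(ηα+1)) dμ. Then for every strictly positive probability density π with the relevant integrals finite, KL(π, g) = (η/(ηα+1)) · ∫ π(a)·[(1/η)·(log π(a) − log π_t(a)) − Q(a) + α·log π(a)] dμ(a) + log Z. In particular, minimizing the objective J(π) = E_{a∼π}[(1/η)(log π(a) − log π_t(a)) − Q(a) + α·log π(a)] over densities π is equivalent to minimizing KL(π, g). -/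
open MeasureTheory

/-- For the mirror-descent target `g(a) = exp((η·Q(a) + log π_t(a))/(ηα+1)) / Z`, every
strictly positive probability density `π` with the relevant integrals finite satisfies
`KL(π, g) = (η/(ηα+1)) · ∫ π·[(1/η)(log π − log π_t) − Q + α·log π] dμ + log Z`;
in particular, minimizing `J(π) = E_{a∼π}[(1/η)(log π − log π_t) − Q + α·log π]` over
densities is equivalent to minimizing `KL(π, g)`. -/
theorem stmt_12 {A : Type*} [MeasurableSpace A] (μ : Measure A) [IsFiniteMeasure μ]
    (Q : A → ℝ) (hQm : Measurable Q) (C : ℝ) (hQb : ∀ a, |Q a| ≤ C)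
    (πt : A → ℝ) (hπtm : Measurable πt) (hπt0 : ∀ a, 0 < πt a)
    (bt : ℝ) (hπtb : ∀ a, πt a ≤ bt) (hπt1 : ∫ a, πt a ∂μ = 1)
    (η α : ℝ) (hη : 0 < η) (hα : 0 ≤ α)
    (Z : ℝ)
    (hZ : Z = ∫ a, Real.exp ((η * Q a + Real.log (πt a)) / (η * α + 1)) ∂μ)
    (g : A → ℝ)
    (hg : ∀ a, g a = Real.exp ((η * Q a + Real.log (πt a)) / (η * α + 1)) / Z)
    (π : A → ℝ) (hπm : Measurable π) (hπ0 : ∀ a, 0 < π a)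
    (hπ1 : ∫ a, π a ∂μ = 1)
    (hint1 : Integrable (fun a => π a * Q a) μ)
    (hint2 : Integrable (fun a => π a * Real.log (π a)) μ)
    (hint3 : Integrable (fun a => π a * Real.log (πt a)) μ) :
    ∫ a, π a * Real.log (π a / g a) ∂μ =
      (η / (η * α + 1)) *
          (∫ a, π a * ((1 / η) * (Real.log (π a) - Real.log (πt a)) - Q a +
            α * Real.log (π a)) ∂μ) +
        Real.log Z := by
  have hs : (0:ℝ) < η * α + 1 := by positivity
  have hμ : μ ≠ 0 := by
    intro h
    rw [h, integral_zero_measure] at hπ1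
    exact one_ne_zero hπ1.symm
  have hπint : Integrable π μ := by
    by_contra h
    rw [integral_undef h] at hπ1
    exact one_ne_zero hπ1.symm
  -- integrability of the exponential
  set e : A → ℝ := fun a => Real.exp ((η * Q a + Real.log (πt a)) / (η * α + 1)) with he
  have hem : Measurable e := by
    apply Real.measurable_exp.comp
    exact ((hQm.const_mul η).add (hπtm.log)).div_const _
  have heint : Integrable e μ := by
    refine (integrable_const (Real.exp ((η * C + Real.log bt) / (η * α + 1)))).mono'
      hem.aestronglyMeasurable (ae_of_all _ fun a => ?_)
    rw [Real.norm_eq_abs, abs_of_pos (Real.exp_pos _)]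
    apply Real.exp_le_exp.mpr
    have h1 : η * Q a ≤ η * C := by nlinarith [le_abs_self (Q a), hQb a]
    have h2 : Real.log (πt a) ≤ Real.log bt := Real.log_le_log (hπt0 a) (hπtb a)
    exact div_le_div_of_nonneg_right (add_le_add h1 h2) hs.le
  have hZpos : 0 < Z := by
    rw [hZ]
    rw [integral_pos_iff_support_of_nonneg (fun a => (Real.exp_pos _).le) heint]
    exact lt_of_lt_of_le (Measure.measure_univ_pos.mpr hμ)
      (measure_mono fun a _ => (Real.exp_pos _).ne')
  have key : ∀ a, π a * Real.log (π a / g a) =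
      π a * Real.log (π a) - (η / (η * α + 1)) * (π a * Q a)
        - (1 / (η * α + 1)) * (π a * Real.log (πt a)) + Real.log Z * π a := by
    intro a
    have hg' : Real.log (g a) = (η * Q a + Real.log (πt a)) / (η * α + 1) - Real.log Z := by
      rw [hg a, Real.log_div (Real.exp_ne_zero _) (ne_of_gt hZpos), Real.log_exp]
    have hgpos : g a ≠ 0 := by rw [hg a]; positivity
    rw [Real.log_div (ne_of_gt (hπ0 a)) hgpos, hg']
    field_simp
    ring
  have hL : ∫ a, π a * Real.log (π a / g a) ∂μ =
      (∫ a, π a * Real.log (π a) ∂μ) - (η / (η * α + 1)) * (∫ a, π a * Q a ∂μ)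
        - (1 / (η * α + 1)) * (∫ a, π a * Real.log (πt a) ∂μ) + Real.log Z := by
    have h1 : Integrable (fun a => π a * Real.log (π a)
        - (η / (η * α + 1)) * (π a * Q a)) μ := hint2.sub (hint1.const_mul _)
    have h2 : Integrable (fun a => π a * Real.log (π a)
        - (η / (η * α + 1)) * (π a * Q a)
        - (1 / (η * α + 1)) * (π a * Real.log (πt a))) μ := h1.sub (hint3.const_mul _)
    have h3 : Integrable (fun a => Real.log Z * π a) μ := hπint.const_mul _
    rw [integral_congr_ae (ae_of_all _ key)]
    rw [integral_add h2 h3, integral_sub h1 (hint3.const_mul _),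
      integral_sub hint2 (hint1.const_mul _),
      integral_const_mul, integral_const_mul, integral_const_mul, hπ1, mul_one]
  have keyR : ∀ a, π a * ((1 / η) * (Real.log (π a) - Real.log (πt a)) - Q a +
      α * Real.log (π a)) =
      (1 / η + α) * (π a * Real.log (π a)) - (1 / η) * (π a * Real.log (πt a))
        - π a * Q a := by
    intro a; ring
  have hR : ∫ a, π a * ((1 / η) * (Real.log (π a) - Real.log (πt a)) - Q a +
      α * Real.log (π a)) ∂μ =
      (1 / η + α) * (∫ a, π a * Real.log (π a) ∂μ)
        - (1 / η) * (∫ a, π a * Real.log (πt a) ∂μ) - ∫ a, π a * Q a ∂μ := by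
    have h4 : Integrable (fun a => (1 / η + α) * (π a * Real.log (π a))
        - (1 / η) * (π a * Real.log (πt a))) μ :=
      (hint2.const_mul _).sub (hint3.const_mul _)
    rw [integral_congr_ae (ae_of_all _ keyR)]
    rw [integral_sub h4 hint1, integral_sub (hint2.const_mul _) (hint3.const_mul _),
      integral_const_mul, integral_const_mul]
  rw [hL, hR]
  field_simp
  ring
end

section
/- Let (A, μ) be a finite measure space, Q_t : A → ℝ bounded measurable, π_t a strictly positive bounded probability density, η > 0, α ≥ 0, and let π_{t+1}(a) = exp((η·Q_t(a) + log π_t(a))/(ηα+1)) / Z with Z the normalizing constant. Then for every strictly positive probability density π with the relevant integrals finite: ∫ (Q_t(a) − α·log π_{t+1}(a)) · (π(a) − π_{t+1}(a)) dμ(a) ≤ (1/η) · (KL(π, π_t) − KL(π_{t+1}, π_t) − KL(π, π_{t+1})). -/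
open MeasureTheory

lemma aux_exp_mul_bound {s M y : ℝ} (hs : 0 < s) (hy : y ≤ M) :
    |Real.exp (y / s) * y| ≤ Real.exp (M / s) * |M| + s := by
  rcases le_or_gt 0 y with h | h
  · rw [abs_of_nonneg (by positivity)]
    have h1 : Real.exp (y/s) ≤ Real.exp (M/s) := Real.exp_le_exp.2 (by gcongr)
    have h2 : y ≤ |M| := le_trans hy (le_abs_self M)
    nlinarith [Real.exp_pos (M/s), Real.exp_pos (y/s), abs_nonneg M]
  · rw [abs_of_nonpos (by nlinarith [Real.exp_pos (y/s)])]
    have h1 : -(y/s) ≤ Real.exp (-(y/s)) := by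
      nlinarith [Real.add_one_le_exp (-(y/s))]
    have hmul : Real.exp (y/s) * Real.exp (-(y/s)) = 1 := by
      rw [← Real.exp_add]; simp
    have h2 : -y ≤ s * Real.exp (-(y/s)) := by
      have := mul_le_mul_of_nonneg_left h1 hs.le
      calc -y = s * (-(y/s)) := by field_simp
        _ ≤ s * Real.exp (-(y/s)) := this
    nlinarith [Real.exp_pos (y/s), Real.exp_pos (M/s), abs_nonneg M,
      mul_le_mul_of_nonneg_left h2 (Real.exp_pos (y/s)).le]

lemma aux_bdd_int {A : Type*} [MeasurableSpace A] (μ : Measure A) [IsFiniteMeasure μ]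
    {g : A → ℝ} (hg : Measurable g) {K : ℝ} (hK : ∀ a, |g a| ≤ K) : Integrable g μ :=
  (integrable_const K).mono' hg.aestronglyMeasurable
    (Filter.Eventually.of_forall fun a => by simpa using hK a)

/-- First-order optimality of the mirror-descent update combined with the three-point
KL identity: with `π_{t+1}(a) = exp((η·Q_t(a) + log π_t(a))/(ηα+1)) / Z`, every strictly
positive probability density `π` with the relevant integrals finite satisfies
`∫ (Q_t − α·log π_{t+1})·(π − π_{t+1}) dμ ≤
  (1/η)·(KL(π, π_t) − KL(π_{t+1}, π_t) − KL(π, π_{t+1}))`. -/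
theorem stmt_15 {A : Type*} [MeasurableSpace A] (μ : Measure A) [IsFiniteMeasure μ]
    (Qt : A → ℝ) (hQm : Measurable Qt) (C : ℝ) (hQb : ∀ a, |Qt a| ≤ C)
    (πt : A → ℝ) (hπtm : Measurable πt) (hπt0 : ∀ a, 0 < πt a)
    (bt : ℝ) (hπtb : ∀ a, πt a ≤ bt) (hπt1 : ∫ a, πt a ∂μ = 1)
    (η α : ℝ) (hη : 0 < η) (hα : 0 ≤ α)
    (Z : ℝ)
    (hZ : Z = ∫ a, Real.exp ((η * Qt a + Real.log (πt a)) / (η * α + 1)) ∂μ)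
    (πt1 : A → ℝ)
    (hπt1def : ∀ a, πt1 a = Real.exp ((η * Qt a + Real.log (πt a)) / (η * α + 1)) / Z)
    (π : A → ℝ) (hπm : Measurable π) (hπ0 : ∀ a, 0 < π a)
    (hπ1 : ∫ a, π a ∂μ = 1)
    (hint1 : Integrable (fun a => π a * Qt a) μ)
    (hint2 : Integrable (fun a => π a * Real.log (π a)) μ)
    (hint3 : Integrable (fun a => π a * Real.log (πt a)) μ) :
    ∫ a, (Qt a - α * Real.log (πt1 a)) * (π a - πt1 a) ∂μ ≤
      (1 / η) *
        ((∫ a, π a * Real.log (π a / πt a) ∂μ) -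
          (∫ a, πt1 a * Real.log (πt1 a / πt a) ∂μ) -
          (∫ a, π a * Real.log (π a / πt1 a) ∂μ)) := by
  have hμ : μ ≠ 0 := by
    intro h; rw [h] at hπt1; simp at hπt1
  obtain ⟨a0⟩ : Nonempty A := by
    have h1 : μ Set.univ ≠ 0 := MeasureTheory.Measure.measure_univ_ne_zero.2 hμ
    exact (MeasureTheory.nonempty_of_measure_ne_zero h1).to_type
  have hC : 0 ≤ C := (abs_nonneg _).trans (hQb a0)
  have hbt : 0 < bt := (hπt0 a0).trans_le (hπtb a0)
  set s : ℝ := η * α + 1 with hsdef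
  have hs : 0 < s := by nlinarith [mul_nonneg hη.le hα]
  set M : ℝ := Real.log bt with hMdef
  have hlogle : ∀ a, Real.log (πt a) ≤ M := fun a => by
    rw [hMdef]; exact Real.log_le_log (hπt0 a) (hπtb a)
  set f : A → ℝ := fun a => Real.exp ((η * Qt a + Real.log (πt a)) / s) with hfdef
  have hfm : Measurable f := (((hQm.const_mul η).add hπtm.log).div_const s).exp
  have hf0 : ∀ a, 0 < f a := fun a => Real.exp_pos _
  have hfb : ∀ a, f a ≤ Real.exp ((η * C + M) / s) := fun a => by
    rw [hfdef]
    apply Real.exp_le_exp.2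
    apply (div_le_div_iff_of_pos_right hs).2
    have := (abs_le.1 (hQb a)).2
    have := hlogle a
    nlinarith [mul_le_mul_of_nonneg_left (abs_le.1 (hQb a)).2 hη.le]
  have hfsplit : ∀ a, f a = Real.exp (η * Qt a / s) * Real.exp (Real.log (πt a) / s) := by
    intro a; rw [hfdef, ← Real.exp_add, ← add_div]
  have hfint : Integrable f μ :=
    aux_bdd_int μ hfm fun a => by rw [abs_of_pos (hf0 a)]; exact hfb a
  have hfQint : Integrable (fun a => f a * Qt a) μ := by
    apply aux_bdd_int μ (hfm.mul hQm)
    intro a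
    rw [Pi.mul_apply, abs_mul, abs_of_pos (hf0 a)]
    exact mul_le_mul (hfb a) (hQb a) (abs_nonneg _) (Real.exp_pos _).le
  have hfLint : Integrable (fun a => f a * Real.log (πt a)) μ := by
    apply aux_bdd_int μ (hfm.mul hπtm.log)
      (K := Real.exp (η * C / s) * (Real.exp (M / s) * |M| + s))
    intro a
    rw [Pi.mul_apply, hfsplit a, mul_assoc, abs_mul, abs_of_pos (Real.exp_pos _)]
    refine mul_le_mul (Real.exp_le_exp.2 ?_) (aux_exp_mul_bound hs (hlogle a))
      (abs_nonneg _) (Real.exp_pos _).le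
    apply (div_le_div_iff_of_pos_right hs).2
    exact mul_le_mul_of_nonneg_left (abs_le.1 (hQb a)).2 hη.le
  have hZ' : Z = ∫ a, f a ∂μ := hZ
  have hZpos : 0 < Z := by
    rw [hZ']
    refine (integral_pos_iff_support_of_nonneg (fun a => (hf0 a).le) hfint).2 ?_
    have : Function.support f = Set.univ := Set.eq_univ_of_forall fun a => (hf0 a).ne'
    rw [this]
    exact MeasureTheory.Measure.measure_univ_pos.2 hμ
  have hπt1f : ∀ a, πt1 a = f a / Z := fun a => hπt1def a
  have hπt10 : ∀ a, 0 < πt1 a := fun a => by rw [hπt1f a]; exact div_pos (hf0 a) hZpos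
  have hπt1int : Integrable πt1 μ :=
    (hfint.div_const Z).congr (Filter.Eventually.of_forall fun a => (hπt1f a).symm)
  have hπt1sum : ∫ a, πt1 a ∂μ = 1 := by
    rw [integral_congr_ae (Filter.Eventually.of_forall hπt1f), integral_div, ← hZ',
      div_self hZpos.ne']
  have hlogπt1 : ∀ a, Real.log (πt1 a) = (η * Qt a + Real.log (πt a)) / s - Real.log Z := by
    intro a
    rw [hπt1f a, Real.log_div (hf0 a).ne' hZpos.ne', hfdef]
    simp [Real.log_exp]
  have hπint : Integrable π μ := by
    by_contra h; rw [integral_undef h] at hπ1; norm_num at hπ1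
  -- integrability of the three KL integrands
  have hI2 : Integrable (fun a => π a * Real.log (π a / πt a)) μ := by
    have heq : (fun a => π a * Real.log (π a / πt a))
        = fun a => π a * Real.log (π a) - π a * Real.log (πt a) := by
      funext a; rw [Real.log_div (hπ0 a).ne' (hπt0 a).ne']; ring
    rw [heq]; exact hint2.sub hint3
  have hI1 : Integrable (fun a => πt1 a * Real.log (πt1 a / πt a)) μ := by
    have heq : ∀ a, πt1 a * Real.log (πt1 a / πt a)
        = (η / s / Z) * (f a * Qt a) + ((1 / s - 1) / Z) * (f a * Real.log (πt a))
          - (Real.log Z / Z) * f a := by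
      intro a
      rw [Real.log_div (hπt10 a).ne' (hπt0 a).ne', hlogπt1 a, hπt1f a]
      field_simp
      ring
    refine (((hfQint.const_mul _).add (hfLint.const_mul _)).sub (hfint.const_mul _)).congr
      (Filter.Eventually.of_forall fun a => (heq a).symm)
  have hI3 : Integrable (fun a => π a * Real.log (π a / πt1 a)) μ := by
    have heq : ∀ a, π a * Real.log (π a / πt1 a)
        = π a * Real.log (π a) - (η / s) * (π a * Qt a) - (1 / s) * (π a * Real.log (πt a))
          + Real.log Z * π a := by
      intro a
      rw [Real.log_div (hπ0 a).ne' (hπt10 a).ne', hlogπt1 a]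
      field_simp
      ring
    refine (((hint2.sub (hint1.const_mul _)).sub (hint3.const_mul _)).add
      (hπint.const_mul _)).congr (Filter.Eventually.of_forall fun a => (heq a).symm)
  -- pointwise key identity
  have key : ∀ a, (Qt a - α * Real.log (πt1 a)) * (π a - πt1 a)
      = (1 / η) * (π a * Real.log (π a / πt a) - πt1 a * Real.log (πt1 a / πt a)
          - π a * Real.log (π a / πt1 a))
        + (s * Real.log Z / η) * (π a - πt1 a) := by
    intro a
    rw [Real.log_div (hπ0 a).ne' (hπt0 a).ne', Real.log_div (hπt10 a).ne' (hπt0 a).ne',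
      Real.log_div (hπ0 a).ne' (hπt10 a).ne', hlogπt1 a, hsdef]
    have h1 : η * α + 1 ≠ 0 := by positivity
    field_simp
    ring
  -- conclude with equality
  have hIa : Integrable (fun a => π a * Real.log (π a / πt a)
      - πt1 a * Real.log (πt1 a / πt a)) μ := by exact hI2.sub hI1
  have hIb : Integrable (fun a => π a * Real.log (π a / πt a)
      - πt1 a * Real.log (πt1 a / πt a) - π a * Real.log (π a / πt1 a)) μ := by
    exact hIa.sub hI3
  have hIc : Integrable (fun a => (1 / η) * (π a * Real.log (π a / πt a)
      - πt1 a * Real.log (πt1 a / πt a) - π a * Real.log (π a / πt1 a))) μ := by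
    exact hIb.const_mul _
  have hId : Integrable (fun a => π a - πt1 a) μ := by exact hπint.sub hπt1int
  have hIe : Integrable (fun a => (s * Real.log Z / η) * (π a - πt1 a)) μ := by
    exact hId.const_mul _
  apply le_of_eq
  calc ∫ a, (Qt a - α * Real.log (πt1 a)) * (π a - πt1 a) ∂μ
      = ∫ a, ((1 / η) * (π a * Real.log (π a / πt a) - πt1 a * Real.log (πt1 a / πt a)
          - π a * Real.log (π a / πt1 a))
        + (s * Real.log Z / η) * (π a - πt1 a)) ∂μ :=
        integral_congr_ae (Filter.Eventually.of_forall key)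
    _ = (1 / η) * ((∫ a, π a * Real.log (π a / πt a) ∂μ)
          - (∫ a, πt1 a * Real.log (πt1 a / πt a) ∂μ)
          - (∫ a, π a * Real.log (π a / πt1 a) ∂μ))
        + (s * Real.log Z / η) * ((∫ a, π a ∂μ) - ∫ a, πt1 a ∂μ) := by
        rw [integral_add hIc hIe, integral_const_mul _ _, integral_const_mul _ _,
          integral_sub hIa hI3, integral_sub hI2 hI1, integral_sub hπint hπt1int]
    _ = (1 / η) * ((∫ a, π a * Real.log (π a / πt a) ∂μ)
          - (∫ a, πt1 a * Real.log (πt1 a / πt a) ∂μ)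
          - (∫ a, π a * Real.log (π a / πt1 a) ∂μ)) := by
        rw [hπ1, hπt1sum]; ring
end
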